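/- There exist universal constants C > 0 and C' > 0 such that for every integer d ≥ 2 there are thresholds W₀ and D₀ (depending only on d) with the following property: for every M̃ > 0, every function f : ℝ^d → ℝ that is 1-Lipschitz on the cube [−M̃, M̃]^d, every even integer W ≥ W₀ and every integer D ≥ D₀, there exists a GroupSort network f̃ : ℝ^d → ℝ of width W and depth D (grouping size 2) such that sup_{x ∈ [−M̃, M̃]^d} |f(x) − f̃(x)| ≤ C' · M̃ · √d · max( 2^{−D/(C d²)}, W^{−1/d²} ). -/

import Mathlib

open MeasureTheory
open scoped ENNReal NNReal BigOperators

noncomputable section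

abbrev Euc (k : ℕ) := EuclideanSpace ℝ (Fin k)

/-- The GroupSort activation with grouping size 2 on ℝ^{2k}: each consecutive pair
of coordinates is replaced by (their max, their min). -/
noncomputable def gsAct {k : ℕ} (x : Euc (2 * k)) : Euc (2 * k) :=
  WithLp.toLp 2 fun j =>
    if _h : j.val % 2 = 0 then
      max (x j) (x ⟨j.val + 1, by have := j.isLt; omega⟩)
    else
      min (x ⟨j.val - 1, by have := j.isLt; omega⟩) (x j)

/-- Hidden stack of a GroupSort network from ℝ^d of width `2k` (no norm constraints):
composition of `h` blocks σ₂∘(affine). -/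
inductive IsGSStack (d k : ℕ) : ℕ → (Euc d → Euc (2 * k)) → Prop
  | base (V : Euc d →L[ℝ] Euc (2 * k)) (c : Euc (2 * k)) :
      IsGSStack d k 1 (fun x => gsAct (V x + c))
  | step (h : ℕ) (φ : Euc d → Euc (2 * k))
      (V : Euc (2 * k) →L[ℝ] Euc (2 * k)) (c : Euc (2 * k))
      (hφ : IsGSStack d k h φ) :
      IsGSStack d k (h + 1) (fun x => gsAct (V (φ x) + c))

/-- `f` is a GroupSort network (grouping size 2) from ℝ^d to ℝ of width `2k`
and depth `D`. -/
def IsGSNet (d k : ℕ) (D : ℕ) (f : Euc d → ℝ) : Prop :=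
  (D = 1 ∧ ∃ (V : Euc d →L[ℝ] ℝ) (c : ℝ), f = fun x => V x + c) ∨
  (2 ≤ D ∧ ∃ φ : Euc d → Euc (2 * k), IsGSStack d k (D - 1) φ ∧
      ∃ (V : Euc (2 * k) →L[ℝ] ℝ) (c : ℝ), f = fun x => V (φ x) + c)

/-! ### Auxiliary machinery -/

lemma gsAct_even {k : ℕ} (x : Euc (2*k)) (t : ℕ) (h : 2*t+1 < 2*k) :
    gsAct x ⟨2*t, by omega⟩ = max (x ⟨2*t, by omega⟩) (x ⟨2*t+1, h⟩) := by
  simp only [gsAct]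
  rw [dif_pos (by omega)]

def coordCLM {m n : ℕ} (F : Fin n → (Euc m →L[ℝ] ℝ)) : Euc m →L[ℝ] Euc n :=
  LinearMap.toContinuousLinearMap
    { toFun := fun x => (WithLp.toLp 2 (fun j => F j x) : Euc n)
      map_add' := by intro x y; ext j; simp
      map_smul' := by intro c x; ext j; simp }

lemma coordCLM_apply {m n : ℕ} (F : Fin n → (Euc m →L[ℝ] ℝ)) (x : Euc m) (j : Fin n) :
    coordCLM F x j = F j x := rfl

/-- `g` is a family of `M` functions jointly representable by a depth-`h` stack
followed by affine readouts. -/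
def GSRep (d k h M : ℕ) (g : Fin M → Euc d → ℝ) : Prop :=
  ∃ φ, IsGSStack d k h φ ∧ ∃ V : Fin M → (Euc (2*k) →L[ℝ] ℝ), ∃ c : Fin M → ℝ,
    ∀ m x, V m (φ x) + c m = g m x

lemma maxRep {d k : ℕ} (s : ℕ) : ∀ (M : ℕ) (g : Fin M → Euc d → ℝ) (h : ℕ),
    GSRep d k h M g → ∀ (h1 : 1 ≤ M), M ≤ k → M ≤ 2^s →
    ∃ φ, IsGSStack d k (h+s) φ ∧ ∃ (V : Euc (2*k) →L[ℝ] ℝ) (c : ℝ),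
      ∀ x, V (φ x) + c =
        Finset.univ.sup' ⟨⟨0, h1⟩, Finset.mem_univ _⟩ (fun m => g m x) := by
  induction s with
  | zero =>
    intro M g h hrep h1 hk h2
    obtain ⟨φ, hφ, V, c, hVc⟩ := hrep
    obtain rfl : M = 1 := by simpa using le_antisymm h2 h1
    refine ⟨φ, hφ, V 0, c 0, fun x => ?_⟩
    rw [hVc]
    refine (le_antisymm (Finset.sup'_le _ (fun m => g m x) fun m _ => le_of_eq (by rw [Fin.eq_zero m]))
      (Finset.le_sup' (fun m => g m x) (Finset.mem_univ 0))).symm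
  | succ s ih =>
    intro M g h hrep h1 hk h2
    obtain ⟨φ, hφ, V, c, hVc⟩ := hrep
    set M' := (M+1)/2 with hM'def
    have hM' : 1 ≤ M' := by omega
    have hM'k : M' ≤ k := by omega
    have hM'2 : M' ≤ 2^s := by
      have : 2^(s+1) = 2*2^s := by ring
      omega
    have hmi : ∀ t : ℕ, min t (M-1) < M := fun t => by omega
    set mi : ℕ → Fin M := fun t => ⟨min t (M-1), hmi t⟩ with hmidef
    set V' : Euc (2*k) →L[ℝ] Euc (2*k) := coordCLM (fun j => V (mi j.val)) with hV'def
    set c' : Euc (2*k) := (WithLp.toLp 2 (fun j : Fin (2*k) => c (mi j.val)) : Euc (2*k)) with hc'def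
    set φ' : Euc d → Euc (2*k) := fun x => gsAct (V' (φ x) + c') with hφ'def
    have hφ' : IsGSStack d k (h+1) φ' := IsGSStack.step h φ V' c' hφ
    have hj2 : ∀ j : Fin M', 2*j.val+1 < 2*k := fun j => by
      have := j.isLt; omega
    set g' : Fin M' → Euc d → ℝ :=
      fun j x => max (g (mi (2*j.val)) x) (g (mi (2*j.val+1)) x) with hg'def
    have hval : ∀ (x : Euc d) (t : ℕ) (ht : t < 2*k),
        (V' (φ x) + c') ⟨t, ht⟩ = g (mi t) x := by
      intro x t ht
      have : (V' (φ x) + c') ⟨t, ht⟩ = V' (φ x) ⟨t, ht⟩ + c' ⟨t, ht⟩ := rfl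
      rw [this, hV'def, coordCLM_apply]
      exact hVc _ x
    have hrep' : GSRep d k (h+1) M' g' := by
      refine ⟨φ', hφ', fun j => EuclideanSpace.proj ⟨2*j.val, by have := hj2 j; omega⟩,
        fun _ => 0, fun j x => ?_⟩
      show gsAct (V' (φ x) + c') ⟨2*j.val, by have := hj2 j; omega⟩ + 0 = g' j x
      rw [gsAct_even (V' (φ x) + c') j.val (hj2 j), hval x, hval x]
      simp [hg'def]
    obtain ⟨φ'', hst, V'', c'', hev⟩ := ih M' g' (h+1) hrep' hM' hM'k hM'2
    rw [show h+1+s = h+(s+1) by omega] at hst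
    refine ⟨φ'', hst, V'', c'', fun x => ?_⟩
    rw [hev x]
    refine le_antisymm (Finset.sup'_le _ _ fun j _ => ?_) (Finset.sup'_le _ _ fun m _ => ?_)
    · simp only [hg'def]
      exact max_le (Finset.le_sup' (fun m => g m x) (Finset.mem_univ _))
        (Finset.le_sup' (fun m => g m x) (Finset.mem_univ _))
    · have hjlt : m.val/2 < M' := by have := m.isLt; omega
      refine le_trans ?_ (Finset.le_sup' (fun j => g' j x) (Finset.mem_univ ⟨m.val/2, hjlt⟩))
      rcases Nat.even_or_odd m.val with he | ho
      · have : mi (2*(m.val/2)) = m := by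
          apply Fin.ext
          simp only [hmidef]
          obtain ⟨r, hr⟩ := he
          have := m.isLt
          omega
        calc g m x = g (mi (2*(m.val/2))) x := by rw [this]
        _ ≤ _ := le_max_left _ _
      · have : mi (2*(m.val/2)+1) = m := by
          apply Fin.ext
          simp only [hmidef]
          obtain ⟨r, hr⟩ := ho
          have := m.isLt
          omega
        calc g m x = g (mi (2*(m.val/2)+1)) x := by rw [this]
        _ ≤ _ := le_max_right _ _

lemma baseRep {d k M : ℕ} (hd : 1 ≤ d) (hk : M*d ≤ k)
    (p : Fin M → Euc d) (F0 : Fin M → ℝ) :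
    GSRep d k 1 M (fun m x => F0 m - ∑ i : Fin d, |x i - p m i|) := by
  have he : ∀ (m : Fin M) (i : Fin d), d*m.val + i.val < M*d := by
    intro m i
    calc d*m.val + i.val < d*m.val + d := by omega
    _ = d*(m.val+1) := by ring
    _ ≤ d*M := Nat.mul_le_mul_left d m.isLt
    _ = M*d := Nat.mul_comm d M
  set F : Fin (2*k) → (Euc d →L[ℝ] ℝ) := fun j =>
    if h : j.val/2 < M*d then
      (if j.val % 2 = 0 then (1:ℝ) else -1) •
        EuclideanSpace.proj (⟨(j.val/2)%d, Nat.mod_lt _ hd⟩ : Fin d)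
    else 0 with hF
  set c₁ : Euc (2*k) := (WithLp.toLp 2 fun j : Fin (2*k) =>
    if h : j.val/2 < M*d then
      (if j.val % 2 = 0 then (-1:ℝ) else 1) *
        p ⟨j.val/2/d, (Nat.div_lt_iff_lt_mul hd).2 h⟩ ⟨(j.val/2)%d, Nat.mod_lt _ hd⟩
    else 0 : Euc (2*k)) with hc₁
  set φ : Euc d → Euc (2*k) := fun x => gsAct (coordCLM F x + c₁) with hφ
  have key : ∀ (m : Fin M) (i : Fin d) (x : Euc d),
      φ x ⟨2*(d*m.val+i.val), by have := he m i; omega⟩ = |x i - p m i| := by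
    intro m i x
    set e := d*m.val + i.val with hedef
    have hed : e % d = i.val := by
      rw [hedef, Nat.add_comm, Nat.add_mul_mod_self_left]
      exact Nat.mod_eq_of_lt i.isLt
    have hediv : e / d = m.val := by
      rw [hedef, Nat.mul_add_div (by omega)]
      simp [Nat.div_eq_of_lt i.isLt]
    have h2e : 2*e+1 < 2*k := by have := he m i; omega
    have heMd : e < M*d := he m i
    have hmod2 : (2*e) % 2 = 0 := by omega
    have hdiv2 : (2*e) / 2 = e := by omega
    have hmod2' : (2*e+1) % 2 = 1 := by omega
    have hdiv2' : (2*e+1) / 2 = e := by omega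
    have hval0 : (coordCLM F x + c₁) ⟨2*e, by omega⟩ = x i - p m i := by
      show F ⟨2*e, by omega⟩ x + c₁ ⟨2*e, by omega⟩ = _
      rw [hF, hc₁]
      simp only [hdiv2, hmod2]
      simp only [hed, hediv, Fin.eta]
      simp [heMd, PiLp.proj_apply, hdiv2, hed, hediv, Fin.eta]
      exact congrArg (fun z => x i - p m z) (Fin.ext rfl)
    have hval1 : (coordCLM F x + c₁) ⟨2*e+1, by omega⟩ = p m i - x i := by
      show F ⟨2*e+1, by omega⟩ x + c₁ ⟨2*e+1, by omega⟩ = _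
      rw [hF, hc₁]
      simp only [hdiv2', hmod2']
      simp only [hed, hediv, Fin.eta]
      simp [heMd, PiLp.proj_apply, hdiv2', hed, hediv, Fin.eta]
      rw [sub_eq_neg_add]
    show gsAct (coordCLM F x + c₁) ⟨2*e, by omega⟩ = _
    rw [gsAct_even _ e h2e, hval0, hval1]
    rw [abs_sub_comm (x i) (p m i), abs_eq_max_neg, neg_sub]
    exact max_comm _ _
  refine ⟨φ, IsGSStack.base (coordCLM F) c₁, fun m => ∑ i : Fin d,
    -(EuclideanSpace.proj (⟨2*(d*m.val+i.val), by have := he m i; omega⟩ : Fin (2*k))),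
    fun m => F0 m, fun m x => ?_⟩
  have : (∑ i : Fin d, -(EuclideanSpace.proj
      (⟨2*(d*m.val+i.val), by have := he m i; omega⟩ : Fin (2*k)))) (φ x)
      = ∑ i : Fin d, -(φ x ⟨2*(d*m.val+i.val), by have := he m i; omega⟩) := by
    rw [ContinuousLinearMap.sum_apply]
    simp
  rw [this]
  have : ∀ i : Fin d, -(φ x ⟨2*(d*m.val+i.val), by have := he m i; omega⟩)
      = -|x i - p m i| := fun i => by rw [key m i x]
  rw [Finset.sum_congr rfl (fun i _ => this i)]
  rw [Finset.sum_neg_distrib]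
  ring

lemma l2_le_l1 {n : ℕ} (y : EuclideanSpace ℝ (Fin n)) : ‖y‖ ≤ ∑ i, |y i| := by
  rw [EuclideanSpace.norm_eq]
  have h1 : ∀ i ∈ Finset.univ, ‖y i‖ ^ 2 ≤ |y i| * ∑ j, |y j| := by
    intro i _
    have hle : |y i| ≤ ∑ j, |y j| :=
      Finset.single_le_sum (f := fun j => |y j|) (fun j _ => abs_nonneg _) (Finset.mem_univ i)
    rw [Real.norm_eq_abs, sq]
    exact mul_le_mul_of_nonneg_left hle (abs_nonneg _)
  calc Real.sqrt (∑ i, ‖y i‖ ^ 2) ≤ Real.sqrt (∑ i, |y i| * ∑ j, |y j|) :=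
        Real.sqrt_le_sqrt (Finset.sum_le_sum h1)
    _ = Real.sqrt ((∑ i, |y i|) * (∑ j, |y j|)) := by rw [← Finset.sum_mul]
    _ = ∑ i, |y i| := Real.sqrt_mul_self (Finset.sum_nonneg fun i _ => abs_nonneg _)

lemma cell {Mt x : ℝ} (hMt : 0 < Mt) (N : ℕ) (hN : 1 ≤ N) (hx : |x| ≤ Mt) :
    ∃ n : ℕ, n < N ∧ |x - (-Mt + (2*n+1)*(Mt/N))| ≤ Mt/N := by
  have hNR : (0:ℝ) < N := by exact_mod_cast hN
  set s : ℝ := Mt/N with hs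
  have hh : 0 < s := by positivity
  have hxM := abs_le.1 hx
  have hx0 : 0 ≤ x + Mt := by linarith
  have hNs : (N:ℝ) * s = Mt := by rw [hs]; field_simp
  rcases le_or_gt (⌊(x + Mt)/(2*s)⌋₊) (N-1) with hc | hc
  · refine ⟨⌊(x + Mt)/(2*s)⌋₊, by omega, ?_⟩
    set n := ⌊(x + Mt)/(2*s)⌋₊
    have h1 : (n:ℝ) ≤ (x + Mt)/(2*s) := Nat.floor_le (by positivity)
    have h2 : (x + Mt)/(2*s) < n + 1 := Nat.lt_floor_add_one _
    rw [abs_le]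
    constructor
    · rw [le_div_iff₀ (by positivity)] at h1; nlinarith
    · rw [div_lt_iff₀ (by positivity)] at h2; nlinarith
  · refine ⟨N-1, by omega, ?_⟩
    have hfl : (N:ℝ) ≤ (x + Mt)/(2*s) := by
      have : N ≤ ⌊(x + Mt)/(2*s)⌋₊ := by omega
      exact_mod_cast le_trans (Nat.cast_le.2 this) (Nat.floor_le (by positivity))
    rw [le_div_iff₀ (by positivity)] at hfl
    have hxMt : x = Mt := le_antisymm hxM.2 (by nlinarith)
    have hcast : ((N-1 : ℕ) : ℝ) = (N:ℝ) - 1 := by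
      have : (1:ℕ) ≤ N := hN
      push_cast [this]
      ring
    rw [hcast, hxMt, abs_le]
    constructor <;> nlinarith

set_option maxHeartbeats 1000000 in
/-- **GroupSort networks approximate Lipschitz functions on cubes**
(Lemma 3 of the paper, after Tanielian–Biau). -/
theorem groupSort_approximates_lipschitz :
    ∃ C > (0 : ℝ), ∃ C' > (0 : ℝ),
      ∀ d : ℕ, 2 ≤ d →
      ∃ W₀ D₀ : ℕ,
      ∀ Mt : ℝ, 0 < Mt →
      ∀ f : Euc d → ℝ, LipschitzOnWith 1 f {x : Euc d | ∀ i, |x i| ≤ Mt} →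
      ∀ (kf D : ℕ), W₀ ≤ 2 * kf → D₀ ≤ D →
      ∃ ft : Euc d → ℝ, IsGSNet d kf D ft ∧
        ∀ x : Euc d, (∀ i, |x i| ≤ Mt) →
          |f x - ft x| ≤ C' * Mt * Real.sqrt d *
            max ((2 : ℝ) ^ (-(D : ℝ) / (C * (d : ℝ) ^ 2)))
              (((2 * kf : ℕ) : ℝ) ^ (-(1 : ℝ) / (d : ℝ) ^ 2)) := by
  refine ⟨2, by norm_num, 2, by norm_num, fun d hd => ?_⟩
  refine ⟨(2*d*(2*d)^d)^2, 8*d^2+8, fun Mt hMt f hf kf D hW hD => ?_⟩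
  have hd0 : (0:ℝ) < d := by exact_mod_cast (by omega : 0 < d)
  have hd2 : (2:ℝ) ≤ (d:ℝ) := by exact_mod_cast hd
  -- basic size facts
  have hTpos : 0 < 2*d*(2*d)^d := Nat.mul_pos (by omega) (pow_pos (by omega) d)
  have hkf1 : 1 ≤ kf := by
    have h := le_trans (Nat.one_le_pow 2 _ hTpos) hW
    omega
  set b : ℝ := ((2*kf : ℕ) : ℝ) with hbdef
  have hb1 : (1:ℝ) ≤ b := by
    rw [hbdef]; exact_mod_cast (by omega : 1 ≤ 2*kf)
  have hb0 : (0:ℝ) ≤ b := by linarith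
  set a₁ : ℝ := (2:ℝ) ^ ((D:ℝ)/(2*(d:ℝ)^2)) with ha₁
  set a₂ : ℝ := b ^ ((1:ℝ)/((d:ℝ)^2)) with ha₂
  have ha₁1 : 1 ≤ a₁ := Real.one_le_rpow (by norm_num) (by positivity)
  have ha₂1 : 1 ≤ a₂ := Real.one_le_rpow hb1 (by positivity)
  set A : ℝ := min a₁ a₂ with hA
  have hA1 : 1 ≤ A := le_min ha₁1 ha₂1
  have hA0 : 0 < A := by linarith
  set N : ℕ := d * ⌈A⌉₊ with hN
  have hceil1 : 1 ≤ ⌈A⌉₊ := Nat.one_le_ceil_iff.2 hA0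
  have hN1 : 1 ≤ N := by
    rw [hN]
    have : 0 < d * ⌈A⌉₊ := Nat.mul_pos (by omega) (by omega)
    omega
  have hNR : (0:ℝ) < (N:ℝ) := by exact_mod_cast hN1
  have hNA : (d:ℝ) * A ≤ (N:ℝ) := by
    rw [hN]
    push_cast
    exact mul_le_mul_of_nonneg_left (Nat.le_ceil A) (by positivity)
  have hceil2A : (⌈A⌉₊ : ℝ) ≤ 2*A := by
    have := Nat.ceil_lt_add_one (le_of_lt hA0)
    linarith
  have hN2dA : (N:ℝ) ≤ 2*(d:ℝ)*A := by
    rw [hN]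
    push_cast
    calc (d:ℝ) * (⌈A⌉₊:ℝ) ≤ (d:ℝ) * (2*A) := mul_le_mul_of_nonneg_left hceil2A (by positivity)
    _ = 2*(d:ℝ)*A := by ring
  set M : ℕ := N ^ d with hM
  have hM1 : 1 ≤ M := Nat.one_le_pow _ _ (by omega)
  have hMreal : (M:ℝ) ≤ (2*(d:ℝ))^d * A^d := by
    rw [hM]
    push_cast
    calc ((N:ℝ))^d ≤ (2*(d:ℝ)*A)^d := pow_le_pow_left₀ (by positivity) hN2dA d
    _ = (2*(d:ℝ))^d * A^d := by rw [mul_pow]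
  -- capacity: width
  have hwidth : M * d ≤ kf := by
    have hAd : A^d ≤ b ^ ((1:ℝ)/(d:ℝ)) := by
      have h1 : A^d ≤ a₂^d := pow_le_pow_left₀ (le_of_lt hA0) (min_le_right _ _) d
      have h2 : a₂^d = b ^ ((1:ℝ)/((d:ℝ)^2) * (d:ℕ)) := by
        rw [ha₂, ← Real.rpow_natCast (b ^ ((1:ℝ)/((d:ℝ)^2))) d, ← Real.rpow_mul hb0]
      have h3 : ((1:ℝ)/((d:ℝ)^2) * (d:ℕ)) = (1:ℝ)/(d:ℝ) := by
        field_simp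
      rw [h2, h3] at h1
      exact h1
    have hbd : b ^ ((1:ℝ)/(d:ℝ)) ≤ b ^ ((1:ℝ)/2) :=
      Real.rpow_le_rpow_of_exponent_le hb1 (by
        rw [div_le_div_iff₀ hd0 (by norm_num : (0:ℝ) < 2)]
        linarith)
    have hsq : b ^ ((1:ℝ)/2) = Real.sqrt b := (Real.sqrt_eq_rpow b).symm
    set t : ℝ := ((2*d*(2*d)^d : ℕ) : ℝ) with htdef
    have ht0 : 0 ≤ t := by positivity
    have hbt : t^2 ≤ b := by
      rw [htdef, hbdef]
      have : (((2*d*(2*d)^d)^2 : ℕ):ℝ) ≤ ((2*kf : ℕ):ℝ) := by exact_mod_cast hW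
      push_cast at this ⊢
      nlinarith [this]
    have htsqrt : t ≤ Real.sqrt b := by
      have := Real.sqrt_le_sqrt hbt
      rwa [Real.sqrt_sq ht0] at this
    have ht2 : t = 2*(d:ℝ)*((2*(d:ℝ))^d) := by
      rw [htdef]; push_cast; ring
    have hmain : (M:ℝ) * (d:ℝ) ≤ (kf:ℝ) := by
      have hs0 : 0 ≤ Real.sqrt b := Real.sqrt_nonneg b
      have hss : Real.sqrt b * Real.sqrt b = b := Real.mul_self_sqrt hb0
      have hAd' : A^d ≤ Real.sqrt b := by
        rw [← hsq]; exact le_trans hAd hbd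
      have h2d0 : (0:ℝ) < (2*(d:ℝ))^d := by positivity
      have hb2kf : b = 2*(kf:ℝ) := by rw [hbdef]; push_cast; ring
      have hApd0 : (0:ℝ) ≤ A^d := by positivity
      calc (M:ℝ)*(d:ℝ) ≤ ((2*(d:ℝ))^d * A^d) * d :=
            mul_le_mul_of_nonneg_right hMreal hd0.le
      _ = (t * A^d)/2 := by rw [ht2]; ring
      _ ≤ (t * Real.sqrt b)/2 := by gcongr
      _ ≤ (Real.sqrt b * Real.sqrt b)/2 := by gcongr
      _ = b/2 := by rw [hss]
      _ = (kf:ℝ) := by rw [hb2kf]; ring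
    have hfin : ((M*d : ℕ):ℝ) ≤ ((kf:ℕ):ℝ) := by push_cast; exact hmain
    exact_mod_cast hfin
  -- capacity: depth
  have hDlarge : 8*d^2+8 ≤ D := hD
  have hD2 : 2 ≤ D := by nlinarith
  have hdepth : M ≤ 2 ^ (D - 2) := by
    have hnat2d : 2*d ≤ 2^(2*d) := by
      have h1 := Nat.lt_two_pow_self (n := d)
      have h2 : 2^(d+1) ≤ 2^(2*d) := Nat.pow_le_pow_right (by omega) (by omega)
      have h3 : 2*d < 2^(d+1) := by
        rw [pow_succ]
        omega
      omega
    have hnat2dd : (2*d)^d ≤ 2^(2*d*d) :=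
      calc (2*d)^d ≤ (2^(2*d))^d := Nat.pow_le_pow_left hnat2d d
      _ = 2^(2*d*d) := (pow_mul 2 (2*d) d).symm
    have h2dd : ((2*(d:ℝ))^d) ≤ (2:ℝ) ^ (((2*d*d : ℕ):ℕ):ℝ) := by
      rw [Real.rpow_natCast]
      exact_mod_cast hnat2dd
    have ha₁d : A^d ≤ (2:ℝ) ^ ((D:ℝ)/(2*(d:ℝ))) := by
      have h1 : A^d ≤ a₁^d := pow_le_pow_left₀ (le_of_lt hA0) (min_le_left _ _) d
      have h2 : a₁^d = (2:ℝ) ^ ((D:ℝ)/(2*(d:ℝ)^2) * (d:ℕ)) := by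
        rw [ha₁, ← Real.rpow_natCast ((2:ℝ) ^ ((D:ℝ)/(2*(d:ℝ)^2))) d,
          ← Real.rpow_mul (by norm_num)]
      have h3 : ((D:ℝ)/(2*(d:ℝ)^2) * (d:ℕ)) = (D:ℝ)/(2*(d:ℝ)) := by
        field_simp
      rw [h2, h3] at h1
      exact h1
    have hMle : (M:ℝ) ≤ (2:ℝ) ^ (((2*d*d : ℕ):ℝ) + (D:ℝ)/(2*(d:ℝ))) := by
      rw [Real.rpow_add (by norm_num)]
      calc (M:ℝ) ≤ (2*(d:ℝ))^d * A^d := hMreal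
      _ ≤ (2:ℝ) ^ (((2*d*d : ℕ):ℝ)) * ((2:ℝ) ^ ((D:ℝ)/(2*(d:ℝ)))) := by
            apply mul_le_mul h2dd ha₁d (by positivity) (by positivity)
    have hexple : (((2*d*d : ℕ)):ℝ) + (D:ℝ)/(2*(d:ℝ)) ≤ (((D-2 : ℕ)):ℝ) := by
      have hcast : (((D-2 : ℕ)):ℝ) = (D:ℝ) - 2 := by
        push_cast [hD2]
        ring
      have hDd : (D:ℝ)/(2*(d:ℝ)) ≤ (D:ℝ)/4 := by
        apply div_le_div_of_nonneg_left (by positivity) (by norm_num) (by linarith)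
      have hDcast : 8*(d:ℝ)^2 + 8 ≤ (D:ℝ) := by exact_mod_cast hDlarge
      have hddcast : ((2*d*d : ℕ):ℝ) = 2*(d:ℝ)^2 := by push_cast; ring
      rw [hcast, hddcast]
      linarith
    have : (M:ℝ) ≤ ((2 ^ (D-2) : ℕ):ℝ) := by
      calc (M:ℝ) ≤ (2:ℝ) ^ (((2*d*d : ℕ):ℝ) + (D:ℝ)/(2*(d:ℝ))) := hMle
      _ ≤ (2:ℝ) ^ ((((D-2 : ℕ)):ℝ)) := Real.rpow_le_rpow_of_exponent_le (by norm_num) hexple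
      _ = ((2 ^ (D-2) : ℕ):ℝ) := by
            rw [Real.rpow_natCast]
            push_cast
            ring
    exact_mod_cast this
  -- grid
  have hMk : M ≤ kf := le_trans (Nat.le_mul_of_pos_right M (by omega)) hwidth
  set q : Fin M → (Fin d → Fin N) := fun m => finFunctionFinEquiv.symm m with hq
  set p : Fin M → Euc d := fun m => WithLp.toLp 2 (fun i => -Mt + (2*((q m i : ℕ):ℝ)+1)*(Mt/(N:ℝ))) with hp
  have hNs : (N:ℝ)*(Mt/(N:ℝ)) = Mt := by field_simp
  have hpcube : ∀ m i, |p m i| ≤ Mt := by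
    intro m i
    have h1 : (0:ℝ) ≤ ((q m i : ℕ):ℝ) := by positivity
    have h2 : ((q m i : ℕ):ℝ) + 1 ≤ (N:ℝ) := by exact_mod_cast (q m i).isLt
    have hsp : 0 < Mt/(N:ℝ) := by positivity
    rw [hp, abs_le]
    constructor
    · simp only []
      nlinarith
    · simp only []
      nlinarith
  have hpmem : ∀ m, p m ∈ {x : Euc d | ∀ i, |x i| ≤ Mt} := fun m => fun i => hpcube m i
  set tf : Fin M → Euc d → ℝ := fun m x => f (p m) - ∑ i, |x i - p m i| with htfam
  have hbase : GSRep d kf 1 M tf := baseRep (by omega) hwidth p (fun m => f (p m))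
  obtain ⟨φ, hstack, V, c, hVc⟩ := maxRep (D-2) M tf 1 hbase hM1 hMk hdepth
  rw [show 1+(D-2) = D-1 by omega] at hstack
  refine ⟨fun x => V (φ x) + c, Or.inr ⟨hD2, φ, hstack, V, c, rfl⟩, fun x hx => ?_⟩
  have hxmem : x ∈ {x : Euc d | ∀ i, |x i| ≤ Mt} := hx
  simp only []
  rw [hVc x]
  set g : ℝ := Finset.univ.sup' ⟨⟨0,hM1⟩, Finset.mem_univ _⟩ (fun m => tf m x) with hg
  have hdistb : ∀ m : Fin M, |f x - f (p m)| ≤ ∑ i, |x i - p m i| := by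
    intro m
    have h1 : dist (f x) (f (p m)) ≤ (1:ℝ≥0) * dist x (p m) :=
      hf.dist_le_mul x hxmem (p m) (hpmem m)
    rw [Real.dist_eq, dist_eq_norm] at h1
    have h2 : ‖x - p m‖ ≤ ∑ i, |x i - p m i| := l2_le_l1 (x - p m)
    simp only [NNReal.coe_one, one_mul] at h1
    exact le_trans h1 h2
  have hupper : ∀ m, tf m x ≤ f x := by
    intro m
    have h1 := (abs_le.1 (hdistb m)).1
    rw [htfam]
    simp only []
    linarith
  have hcover : ∃ m : Fin M, ∀ i, |x i - p m i| ≤ Mt/(N:ℝ) := by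
    have hcells := fun i => cell hMt N hN1 (hx i)
    choose n hn hnb using hcells
    refine ⟨finFunctionFinEquiv (fun i => (⟨n i, hn i⟩ : Fin N)), fun i => ?_⟩
    have hqq : q (finFunctionFinEquiv (fun i => (⟨n i, hn i⟩ : Fin N)))
        = fun i => (⟨n i, hn i⟩ : Fin N) := by
      rw [hq]
      exact Equiv.symm_apply_apply _ _
    rw [hp]
    simp only [hqq]
    exact hnb i
  obtain ⟨m₀, hm₀⟩ := hcover
  have hS₀ : ∑ i, |x i - p m₀ i| ≤ (d:ℝ) * (Mt/(N:ℝ)) := by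
    calc ∑ i, |x i - p m₀ i| ≤ ∑ _i : Fin d, (Mt/(N:ℝ)) :=
          Finset.sum_le_sum (fun i _ => hm₀ i)
    _ = (d:ℝ)*(Mt/(N:ℝ)) := by
          rw [Finset.sum_const, Finset.card_univ, Fintype.card_fin, nsmul_eq_mul]
  have hlower : f x - 2*(d:ℝ)*(Mt/(N:ℝ)) ≤ tf m₀ x := by
    have h1 := (abs_le.1 (hdistb m₀)).2
    rw [htfam]
    simp only []
    linarith
  have hub : g ≤ f x := Finset.sup'_le _ _ (fun m _ => hupper m)
  have hlb : f x - 2*(d:ℝ)*(Mt/(N:ℝ)) ≤ g :=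
    le_trans hlower (Finset.le_sup' (fun m => tf m x) (Finset.mem_univ m₀))
  have hsN : 0 < Mt/(N:ℝ) := by positivity
  have herr : |f x - g| ≤ 2*(d:ℝ)*(Mt/(N:ℝ)) := by
    rw [abs_le]
    constructor
    · linarith
    · nlinarith
  -- final chain
  set ε : ℝ := max ((2:ℝ) ^ (-(D:ℝ)/(2*(d:ℝ)^2))) (b ^ (-(1:ℝ)/(d:ℝ)^2)) with hε
  have hinvA : A⁻¹ ≤ ε := by
    have e1 : (2:ℝ) ^ (-(D:ℝ)/(2*(d:ℝ)^2)) = a₁⁻¹ := by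
      rw [ha₁, ← Real.rpow_neg (by norm_num)]
      congr 1
      ring
    have e2 : b ^ (-(1:ℝ)/(d:ℝ)^2) = a₂⁻¹ := by
      rw [ha₂, ← Real.rpow_neg hb0]
      congr 1
      ring
    rw [hε, e1, e2, hA]
    rcases min_cases a₁ a₂ with ⟨h,_⟩|⟨h,_⟩
    · rw [h]; exact le_max_left _ _
    · rw [h]; exact le_max_right _ _
  have hdN : (d:ℝ)/(N:ℝ) ≤ A⁻¹ := by
    rw [inv_eq_one_div, div_le_div_iff₀ hNR hA0]
    linarith [hNA]
  have hinv0 : (0:ℝ) ≤ A⁻¹ := by positivity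
  have hε0 : (0:ℝ) ≤ ε := le_trans hinv0 hinvA
  have hsd : 1 ≤ Real.sqrt (d:ℝ) := by
    rw [show (1:ℝ) = Real.sqrt 1 by simp]
    exact Real.sqrt_le_sqrt (by linarith)
  calc |f x - g| ≤ 2*(d:ℝ)*(Mt/(N:ℝ)) := herr
  _ = 2*Mt*((d:ℝ)/(N:ℝ)) := by ring
  _ ≤ 2*Mt*A⁻¹ := mul_le_mul_of_nonneg_left hdN (by positivity)
  _ ≤ 2*Mt*ε := mul_le_mul_of_nonneg_left hinvA (by positivity)
  _ ≤ 2*Mt*Real.sqrt (d:ℝ)*ε := by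
        nlinarith [mul_nonneg (mul_nonneg (mul_nonneg (by norm_num : (0:ℝ) ≤ 2) hMt.le) hε0)
          (sub_nonneg.2 hsd)]
  _ = 2 * Mt * Real.sqrt (d:ℝ) * ε := by ring

end
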